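/- Define G_1(θ) = θ·(2−2x_0)/(2−3x_0), where x_0 = x_0(θ) ∈ (0,2/3) is the unique solution of (2−3x_0)^3/(x_0(1−x_0)^2) = θ^2, and define f(θ) = 2 for 0 < θ ≤ 1 and f(θ) = θ + 1/θ for θ ≥ 1. Then G_1(θ) < f(θ) for θ < 1, and G_1(θ) > f(θ) for θ > 1. Moreover G_1(θ) ≤ 2 if and only if θ ≤ 1. -/

import Mathlib

noncomputable def f (x : ℝ) : ℝ := if x < 1 then 2 else x + 1 / x

set_option maxHeartbeats 1000000 in
/-- Comparison of `G₁(θ) = θ(2-2x₀)/(2-3x₀)` with `f(θ)`, where `x₀ ∈ (0,2/3)`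
solves `(2-3x₀)³/(x₀(1-x₀)²) = θ²`: `G₁ < f` for `θ < 1`, `G₁ > f` for `θ > 1`,
and `G₁(θ) ≤ 2 ↔ θ ≤ 1`. -/
theorem stmt10 (θ : ℝ) (hθ : 0 < θ) (x₀ : ℝ) (hx₀ : x₀ ∈ Set.Ioo (0 : ℝ) (2 / 3))
    (heq : (2 - 3 * x₀) ^ 3 / (x₀ * (1 - x₀) ^ 2) = θ ^ 2) :
    (θ < 1 → θ * (2 - 2 * x₀) / (2 - 3 * x₀) < f θ) ∧
    (1 < θ → f θ < θ * (2 - 2 * x₀) / (2 - 3 * x₀)) ∧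
    (θ * (2 - 2 * x₀) / (2 - 3 * x₀) ≤ 2 ↔ θ ≤ 1) := by
  obtain ⟨hx0, hx23⟩ := hx₀
  have h23 : (0:ℝ) < 2 - 3 * x₀ := by linarith
  have h1 : (0:ℝ) < 1 - x₀ := by linarith
  have hD : (0:ℝ) < x₀ * (1 - x₀) ^ 2 := mul_pos hx0 (pow_pos h1 2)
  have hkey : θ ^ 2 * (x₀ * (1 - x₀) ^ 2) = (2 - 3 * x₀) ^ 3 := by
    rw [div_eq_iff hD.ne'] at heq
    linarith [heq]
  set a := θ * (2 - 2 * x₀) / (2 - 3 * x₀) with ha_def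
  have ha_pos : 0 < a :=
    div_pos (mul_pos hθ (by linarith)) h23
  have e1 : a * (2 - 3 * x₀) = θ * (2 - 2 * x₀) := by
    rw [ha_def, div_mul_cancel₀ _ h23.ne']
  have ha2' : a ^ 2 * x₀ * (2 - 3 * x₀) ^ 2 = (4 * (2 - 3 * x₀)) * (2 - 3 * x₀) ^ 2 := by
    linear_combination (a * (2 - 3 * x₀) + θ * (2 - 2 * x₀)) * x₀ * e1 + 4 * hkey
  have ha2 : a ^ 2 * x₀ = 4 * (2 - 3 * x₀) :=
    mul_right_cancel₀ (by positivity) ha2'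
  clear_value a
  clear ha2' heq
  have hsign : (θ ^ 2 - 1) * (x₀ * (1 - x₀) ^ 2)
      = (1 - 2 * x₀) * (14 * x₀ ^ 2 - 21 * x₀ + 8) := by
    linear_combination hkey
  have hQ : (0:ℝ) < 14 * x₀ ^ 2 - 21 * x₀ + 8 := by nlinarith [sq_nonneg (4 * x₀ - 3)]
  refine ⟨?_, ?_, ?_, ?_⟩
  · -- θ < 1
    intro hlt
    have hθ2 : θ ^ 2 < 1 := by nlinarith
    have hx : (1:ℝ)/2 < x₀ := by nlinarith
    have : a ^ 2 < 4 := by nlinarith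
    have : a < 2 := by nlinarith
    simpa [f, if_pos hlt] using this
  · -- 1 < θ
    intro hlt
    have hθ2 : 1 < θ ^ 2 := by nlinarith
    have hx : x₀ < 1/2 := by nlinarith
    have h5 : 2 - 3 * x₀ < θ ^ 2 * x₀ := by
      nlinarith [mul_pos (mul_pos h23 (by linarith : (0:ℝ) < 3 - 4 * x₀))
        (by linarith : (0:ℝ) < 1 - 2 * x₀), sq_nonneg (1 - x₀)]
    have hfθ : f θ = θ + 1 / θ := by
      simp [f, not_lt.mpr hlt.le]
    rw [hfθ, ha_def, lt_div_iff₀ h23]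
    have e0 : (θ + 1 / θ) * θ = θ ^ 2 + 1 := by
      rw [add_mul, one_div_mul_cancel hθ.ne']; ring
    have e : (θ + 1 / θ) * (2 - 3 * x₀) * θ = (θ ^ 2 + 1) * (2 - 3 * x₀) := by
      rw [mul_right_comm, e0]
    have h6 : (θ + 1 / θ) * (2 - 3 * x₀) * θ < θ * (2 - 2 * x₀) * θ := by
      rw [e]; nlinarith
    exact lt_of_mul_lt_mul_right h6 hθ.le
  · -- a ≤ 2 → θ ≤ 1
    intro hle
    by_contra hc
    push_neg at hc
    have hθ2 : 1 < θ ^ 2 := by nlinarith [mul_lt_mul_of_pos_left hc hθ]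
    have hP : 0 < (1 - 2 * x₀) * (14 * x₀ ^ 2 - 21 * x₀ + 8) := by
      rw [← hsign]; exact mul_pos (by linarith) hD
    have hx : x₀ < 1/2 := by
      by_contra h
      push_neg at h
      have := mul_nonpos_of_nonpos_of_nonneg
        (show 1 - 2 * x₀ ≤ 0 by linarith) hQ.le
      linarith
    clear hkey e1 hsign hP
    have h4 : 4 < a ^ 2 := by nlinarith [ha2, hx, hx0]
    nlinarith [ha_pos, hle, h4]
  · -- θ ≤ 1 → a ≤ 2
    intro hle
    have hθ2 : θ ^ 2 ≤ 1 := by nlinarith [mul_le_mul_of_nonneg_left hle hθ.le]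
    have hP : (1 - 2 * x₀) * (14 * x₀ ^ 2 - 21 * x₀ + 8) ≤ 0 := by
      rw [← hsign]
      exact mul_nonpos_of_nonpos_of_nonneg (by linarith) hD.le
    have hx : (1:ℝ)/2 ≤ x₀ := by
      by_contra h
      push_neg at h
      have := mul_pos (show 0 < 1 - 2 * x₀ by linarith) hQ
      linarith
    clear hkey e1 hsign hP
    have h4 : a ^ 2 ≤ 4 := by nlinarith [ha2, hx, hx0]
    nlinarith [ha_pos, h4]
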